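/- arXiv:1205.2179 — 4 statements merged into one kernel-verified Lean document; each statement's English description precedes it below -/
import Mathlib

section
/- Let e ≥ 1 and q a unit modulo e with q a perfect square modulo every divisor of e (e.g. q itself a square integer coprime to e). Then the number of orbits of Z/e under x ↦ qx is odd if e is odd, and even if e is even. -/
open MulAction Function Subgroup

/-- For `e ≥ 1` and `q` a unit modulo `e` which is a perfect square, say
`q = r²` with `r` coprime to `e`, the number of orbits of `ℤ/e` under `x ↦ qx`
(the action of the cyclic group generated by the unit `u` corresponding to `q`)
is odd if `e` is odd, and even if `e` is even; i.e. it has the same parity as `e`. -/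
theorem stmt4 (e q r : ℕ) (he : 1 ≤ e) (hqr : q = r ^ 2) (hr : Nat.Coprime r e)
    (hq : Nat.Coprime q e)
    (u : (ZMod e)ˣ) (hu : (u : ZMod e) = (q : ZMod e)) :
    Nat.card (Quotient (MulAction.orbitRel (Subgroup.zpowers u) (ZMod e))) % 2 = e % 2 := by
  classical
  haveI : NeZero e := ⟨by omega⟩
  set G := Subgroup.zpowers u with hG
  let v : (ZMod e)ˣ := ZMod.unitOfCoprime r hr
  have hvu : v ^ 2 = u := by
    ext
    push_cast [hu, hqr, v]
    rfl
  set α := orbitRel.Quotient G (ZMod e) with hα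
  show Nat.card α % 2 = e % 2
  -- the involution on the quotient induced by multiplication by `v`
  have fwd : ∀ a b : ZMod e, (orbitRel G (ZMod e)).r a b →
      (orbitRel G (ZMod e)).r (v • a) (v • b) := by
    rintro a b ⟨g, rfl⟩
    exact ⟨g, smul_comm _ _ _⟩
  let σ : α → α := Quotient.map' (fun x => v • x) fwd
  have hσmk : ∀ a : ZMod e, σ (Quotient.mk'' a) = Quotient.mk'' (v • a) := fun a => rfl
  have hσσ : ∀ ω : α, σ (σ ω) = ω := by
    intro ω
    induction ω using Quotient.inductionOn' with
    | h a =>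
      rw [hσmk, hσmk, Quotient.eq'']
      exact ⟨⟨u, mem_zpowers u⟩, by
        show u • a = v • v • a
        rw [← hvu, pow_two, mul_smul]⟩
  -- cardinality of orbits
  have hcard : ∀ a : ZMod e, Nat.card (orbit G (v • a)) = Nat.card (orbit G a) := by
    intro a
    have himg : orbit G (v • a) = (v • ·) '' orbit G a := by
      ext z
      constructor
      · rintro ⟨g, rfl⟩
        exact ⟨g • a, mem_orbit _ _, (smul_comm _ _ _)⟩
      · rintro ⟨y, ⟨g, rfl⟩, rfl⟩
        exact ⟨g, smul_comm _ _ _⟩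
    rw [himg, Nat.card_image_of_injective (MulAction.injective v)]
  -- orbit card = minimal period of u
  have horb : ∀ a : ZMod e, Nat.card (orbit G a) = minimalPeriod (u • ·) a := by
    intro a
    rw [Nat.card_congr (orbitZPowersEquiv u a), Nat.card_zmod]
  -- fixed points of σ have odd orbits
  have hfix : ∀ a : ZMod e, σ (Quotient.mk'' a) = Quotient.mk'' a →
      Odd (Nat.card (orbit G a)) := by
    intro a hfa
    rw [hσmk, Quotient.eq''] at hfa
    obtain ⟨⟨g, hg⟩, hga⟩ := hfa
    rw [Subgroup.mem_zpowers_iff] at hg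
    obtain ⟨k, rfl⟩ := hg
    have hga' : u ^ k • a = v • a := hga
    have hv2k : v ^ ((2:ℤ) * k) • a = v • a := by
      rw [zpow_mul]
      norm_cast
      rw [hvu]
      exact hga'
    have h2 : v ^ ((2:ℤ) * k - 1) • a = a := by
      apply MulAction.injective v
      show v • v ^ ((2:ℤ) * k - 1) • a = v • a
      rw [smul_smul]
      have : v * v ^ ((2:ℤ) * k - 1) = v ^ ((2:ℤ) * k) := by
        rw [← zpow_one_add]
        ring_nf
      rw [this, hv2k]
    set m := minimalPeriod (v • ·) a with hm
    have hdvd : (m : ℤ) ∣ (2 * k - 1) := zpow_smul_eq_iff_minimalPeriod_dvd.mp h2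
    have hmodd : Odd m := by
      rcases Nat.even_or_odd m with hev | hod
      · exfalso
        have h2m : (2:ℤ) ∣ (m:ℤ) := by
          obtain ⟨c, hc⟩ := hev
          exact ⟨c, by push_cast [hc]; ring⟩
        obtain ⟨d, hd⟩ := h2m.trans hdvd
        omega
      · exact hod
    have hiter : (u • · : ZMod e → ZMod e) = (v • ·)^[2] := by
      funext x
      show u • x = v • v • x
      rw [← hvu, pow_two, mul_smul]
    have hgcd : Nat.gcd m 2 = 1 := by
      have h1 := Nat.odd_iff.mp hmodd
      have h2 := Nat.gcd_dvd_left m 2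
      have h3 := Nat.gcd_dvd_right m 2
      obtain ⟨c, hc⟩ := h2
      have h4 : Nat.gcd m 2 ≤ 2 := Nat.le_of_dvd (by norm_num) h3
      rcases Nat.lt_or_ge (Nat.gcd m 2) 2 with h5 | h5
      · have h6 : Nat.gcd m 2 ≠ 0 := by
          intro h0
          rw [h0] at hc
          omega
        omega
      · have h6 : Nat.gcd m 2 = 2 := le_antisymm h4 h5
        rw [h6] at hc
        omega
    rw [horb, hiter, minimalPeriod_iterate_eq_div_gcd (two_ne_zero), ← hm, hgcd, Nat.div_one]
    exact hmodd
  -- counting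
  letI : Fintype α := Fintype.ofFinite α
  letI : ∀ ω : α, Fintype ω.orbit := fun ω => Fintype.ofFinite _
  have hsum : e = ∑ ω : α, Nat.card ω.orbit := by
    have h1 := Fintype.card_congr (selfEquivSigmaOrbits' G (ZMod e))
    rw [Fintype.card_sigma, ZMod.card] at h1
    simp only [Nat.card_eq_fintype_card]
    exact h1
  have hwσ : ∀ ω : α, Nat.card (σ ω).orbit = Nat.card ω.orbit := by
    intro ω
    induction ω using Quotient.inductionOn' with
    | h a =>
      rw [hσmk, orbitRel.Quotient.orbit_mk, orbitRel.Quotient.orbit_mk]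
      exact hcard a
  have key : ∑ ω : α, ((1 + Nat.card ω.orbit : ℕ) : ZMod 2) = 0 := by
    apply Finset.sum_ninvolution σ
    · intro a
      rw [hwσ]
      exact CharTwo.add_self_eq_zero _
    · intro a hne heq
      apply hne
      induction a using Quotient.inductionOn' with
      | h x =>
        obtain ⟨c, hc⟩ := hfix x heq
        rw [orbitRel.Quotient.orbit_mk, hc]
        push_cast
        ring_nf
        simp [CharTwo.two_eq_zero]
    · intro a; exact Finset.mem_univ _
    · exact hσσ
  have key2 : ((Fintype.card α : ℕ) : ZMod 2) + ((e : ℕ) : ZMod 2) = 0 := by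
    rw [hsum]
    push_cast at key ⊢
    rw [Finset.sum_add_distrib] at key
    simpa [Finset.card_univ] using key
  have key3 : ((Nat.card α : ℕ) : ZMod 2) = ((e : ℕ) : ZMod 2) := by
    have h := neg_eq_of_add_eq_zero_left key2
    rw [CharTwo.neg_eq] at h
    rw [Nat.card_eq_fintype_card]
    exact h.symm
  exact (ZMod.natCast_eq_natCast_iff' _ _ _).mp key3
end

section
/- Let H be a group and K a finite-index subgroup. For a finite-dimensional complex representation π of H, the composition of the determinant of the restriction of π to K with the transfer map T: H^ab → K^ab equals (det π)^{[H:K]} as a character of H. -/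
open MulAction Subgroup

/-- Let `H` be a group and `K` a finite-index subgroup.  For a
finite-dimensional complex representation `π` of `H` (realized as `π : H →* GL(n, ℂ)`),
the composition of the determinant of the restriction of `π` to `K` with the transfer map
`T : H^{ab} → K^{ab}` equals `(det π)^{[H:K]}` as a character of `H`. -/
theorem stmt7 {H : Type*} [Group H] (K : Subgroup H) [K.FiniteIndex] (n : ℕ)
    (π : H →* Matrix.GeneralLinearGroup (Fin n) ℂ) :
    MonoidHom.transfer ((Matrix.GeneralLinearGroup.det).comp (π.comp K.subtype)) =
      ((Matrix.GeneralLinearGroup.det).comp π) ^ K.index := by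
  classical
  ext g
  letI := K.fintypeQuotientOfFiniteIndex
  set d : H →* ℂˣ := (Matrix.GeneralLinearGroup.det).comp π with hd
  rw [MonoidHom.transfer_eq_prod_quotient_orbitRel_zpowers_quot]
  have h1 : ∀ q : Quotient (orbitRel (zpowers g) (H ⧸ K)),
      ((Matrix.GeneralLinearGroup.det).comp (π.comp K.subtype))
        ⟨q.out.out⁻¹ * g ^ Function.minimalPeriod (g • ·) q.out * q.out.out,
          QuotientGroup.out_conj_pow_minimalPeriod_mem K g q.out⟩ =
      (d g) ^ Function.minimalPeriod (g • ·) q.out := by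
    intro q
    simp only [MonoidHom.comp_apply, Subgroup.coe_subtype, map_mul, map_inv, map_pow, hd]
    rw [mul_comm, ← mul_assoc, mul_inv_cancel, one_mul]
  rw [Finset.prod_congr rfl (fun q _ => h1 q), Finset.prod_pow_eq_pow_sum]
  have h2 : ∑ q : Quotient (orbitRel (zpowers g) (H ⧸ K)),
      Function.minimalPeriod (g • ·) q.out = K.index := by
    simp_rw [minimalPeriod_eq_card]
    rw [index_eq_card, Nat.card_eq_fintype_card,
      Fintype.card_congr (selfEquivSigmaOrbits (zpowers g) (H ⧸ K)), Fintype.card_sigma]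
    exact Finset.sum_congr rfl fun q _ => Fintype.card_congr (Equiv.refl _)
  rw [h2]
  rfl
end

section
/- Let H be a group and K a finite-index subgroup. For a finite-dimensional complex representation σ of K, det(Ind_K^H σ) = (det Ind_K^H 1_K)^{dim σ} · (det σ ∘ T^H_K), where T^H_K is the transfer map H^ab → K^ab and 1_K is the trivial representation of K. -/
/-- The space of the induced representation `Ind_K^H σ`: functions `f : H → V` with
`f(k·h) = σ(k)(f h)` for `k ∈ K`, as a submodule of `H → V`. -/
def indSubmodule {H : Type*} [Group H] (K : Subgroup H) {V : Type*} [AddCommGroup V]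
    [Module ℂ V] (σ : Representation ℂ K V) : Submodule ℂ (H → V) where
  carrier := {f | ∀ (k : K) (h : H), f (↑k * h) = σ k (f h)}
  add_mem' := by
    intro f g hf hg k h
    simp only [Pi.add_apply, hf k h, hg k h, map_add]
  zero_mem' := by
    intro k h
    simp only [Pi.zero_apply, map_zero]
  smul_mem' := by
    intro c f hf k h
    simp only [Pi.smul_apply, hf k h, map_smul]

/-- The induced representation `Ind_K^H σ` of `H`, acting by right translation on
`indSubmodule K σ`. -/
def indRep {H : Type*} [Group H] (K : Subgroup H) {V : Type*} [AddCommGroup V]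
    [Module ℂ V] (σ : Representation ℂ K V) :
    Representation ℂ H (indSubmodule K σ) where
  toFun h :=
    { toFun := fun f => ⟨fun x => f.val (x * h), fun k x => by
        have := f.prop k (x * h)
        simpa [mul_assoc] using this⟩
      map_add' := fun f g => rfl
      map_smul' := fun c f => rfl }
  map_one' := by
    ext f x
    show f.val (x * 1) = f.val x
    rw [mul_one]
  map_mul' := fun h₁ h₂ => by
    ext f x
    show f.val (x * (h₁ * h₂)) = f.val (x * h₁ * h₂)
    rw [mul_assoc]


lemma det_pi_comp_proj {ι κ : Type*} [Fintype ι] [DecidableEq ι] [Fintype κ] [DecidableEq κ]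
    {V : Type*} [AddCommGroup V] [Module ℂ V] (b : Module.Basis κ ℂ V) (A : ι → (V →ₗ[ℂ] V)) :
    LinearMap.det (LinearMap.pi fun i => (A i) ∘ₗ LinearMap.proj i) =
      ∏ i, LinearMap.det (A i) := by
  classical
  let pb : Module.Basis (ι × κ) ℂ (ι → V) := (Pi.basis fun _ : ι => b).reindex (Equiv.sigmaEquivProd ι κ)
  rw [← LinearMap.det_toMatrix pb]
  have hm : LinearMap.toMatrix pb pb (LinearMap.pi fun i => (A i) ∘ₗ LinearMap.proj i)
      = Matrix.reindex (Equiv.prodComm κ ι) (Equiv.prodComm κ ι)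
          (Matrix.blockDiagonal fun i => LinearMap.toMatrix b b (A i)) := by
    ext ⟨i, j⟩ ⟨i', j'⟩
    rw [LinearMap.toMatrix_apply]
    simp only [pb, Module.Basis.repr_reindex_apply, Module.Basis.reindex_apply, Equiv.sigmaEquivProd_symm_apply,
      Pi.basis_apply, Pi.basis_repr, Matrix.reindex_apply, Equiv.prodComm_symm,
      Equiv.prodComm_apply, Prod.swap_prod_mk, Matrix.submatrix_apply,
      Matrix.blockDiagonal_apply]
    simp only [LinearMap.pi_apply, LinearMap.comp_apply, LinearMap.proj_apply]
    by_cases h : i = i'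
    · subst h
      simp [LinearMap.toMatrix_apply]
    · simp [Pi.single_eq_of_ne (Ne.symm h), h]
  rw [hm, Matrix.det_reindex_self, Matrix.det_blockDiagonal]
  simp [LinearMap.det_toMatrix]

lemma det_funLeft_perm {ι : Type*} [Fintype ι] [DecidableEq ι]
    {V : Type*} [AddCommGroup V] [Module ℂ V] [FiniteDimensional ℂ V] (π : Equiv.Perm ι) :
    LinearMap.det (LinearMap.funLeft ℂ V (π : ι → ι)) =
      ((Equiv.Perm.sign π : ℤ) : ℂ) ^ (Module.finrank ℂ V) := by
  classical
  let b := Module.finBasis ℂ V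
  let pb : Module.Basis (ι × Fin (Module.finrank ℂ V)) ℂ (ι → V) :=
    (Pi.basis fun _ : ι => b).reindex (Equiv.sigmaEquivProd ι _)
  rw [← LinearMap.det_toMatrix pb]
  have hm : LinearMap.toMatrix pb pb (LinearMap.funLeft ℂ V (π : ι → ι))
      = Equiv.Perm.permMatrix ℂ (Equiv.prodCongrLeft fun _ : Fin (Module.finrank ℂ V) => π : Equiv.Perm (ι × Fin (Module.finrank ℂ V))) := by
    ext ⟨i, j⟩ ⟨i', j'⟩
    rw [LinearMap.toMatrix_apply]
    simp only [pb, Module.Basis.repr_reindex_apply, Module.Basis.reindex_apply, Equiv.sigmaEquivProd_symm_apply,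
      Pi.basis_apply, Pi.basis_repr, LinearMap.funLeft_apply]
    rw [Equiv.Perm.permMatrix, PEquiv.toMatrix_apply]
    simp only [Equiv.toPEquiv_apply, Option.mem_def, Option.some.injEq,
      Equiv.prodCongrLeft_apply, Prod.mk.injEq]
    by_cases h : π i = i'
    · subst h
      simp [Module.Basis.repr_self, Finsupp.single_apply, eq_comm]
    · rw [if_neg (fun hc => h hc.1), Pi.single_eq_of_ne h]
      simp
  rw [hm, Matrix.det_permutation]
  have : Equiv.Perm.sign (Equiv.prodCongrLeft fun _ : Fin (Module.finrank ℂ V) => π : Equiv.Perm (ι × Fin (Module.finrank ℂ V)))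
      = Equiv.Perm.sign π ^ (Module.finrank ℂ V) := by
    rw [Equiv.Perm.sign_prodCongrLeft]
    simp
  rw [this]
  push_cast
  ring

lemma det_twisted_perm {ι : Type*} [Fintype ι] [DecidableEq ι]
    {V : Type*} [AddCommGroup V] [Module ℂ V] [FiniteDimensional ℂ V]
    (π : Equiv.Perm ι) (A : ι → (V →ₗ[ℂ] V)) :
    LinearMap.det (LinearMap.pi fun i => (A i) ∘ₗ LinearMap.proj (π⁻¹ i)) =
      ((Equiv.Perm.sign π : ℤ) : ℂ) ^ (Module.finrank ℂ V) * ∏ i, LinearMap.det (A i) := by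
  have hsplit : (LinearMap.pi fun i => (A i) ∘ₗ LinearMap.proj (π⁻¹ i)) =
      (LinearMap.pi fun i => (A i) ∘ₗ LinearMap.proj i) ∘ₗ
        LinearMap.funLeft ℂ V ((π⁻¹ : Equiv.Perm ι) : ι → ι) := by
    ext v i
    rfl
  rw [hsplit, LinearMap.det_comp, det_pi_comp_proj (Module.finBasis ℂ V),
    det_funLeft_perm]
  simp [mul_comm]

section aux

variable {H : Type*} [Group H] (K : Subgroup H)

/-- Representative function of a left transversal. -/
noncomputable def tFun (T : K.LeftTransversal) : H ⧸ K → H :=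
  fun q => (T.2.leftQuotientEquiv q : H)

lemma tFun_spec (T : K.LeftTransversal) (q : H ⧸ K) :
    ((tFun K T q : H) : H ⧸ K) = q :=
  T.2.quotientGroupMk_leftQuotientEquiv q

lemma transferElt_mem (T : K.LeftTransversal) (g : H) (q : H ⧸ K) :
    (tFun K T q)⁻¹ * g * tFun K T (g⁻¹ • q) ∈ K := by
  have h : ((tFun K T q : H) : H ⧸ K) = ((g * tFun K T (g⁻¹ • q) : H) : H ⧸ K) := by
    rw [tFun_spec, ← smul_eq_mul, ← MulAction.Quotient.smul_mk, tFun_spec, smul_smul,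
      mul_inv_cancel, one_smul]
  simpa [mul_assoc] using QuotientGroup.eq.mp h

/-- The transfer cocycle. -/
noncomputable def transferElt (T : K.LeftTransversal) (g : H) (q : H ⧸ K) :
    K :=
  ⟨(tFun K T q)⁻¹ * g * tFun K T (g⁻¹ • q), transferElt_mem K T g q⟩

lemma transfer_apply_eq (T : K.LeftTransversal) [K.FiniteIndex]
    {A : Type*} [CommGroup A] (φ : K →* A) (g : H) [inst : Fintype (H ⧸ K)] :
    MonoidHom.transfer φ g = ∏ q : H ⧸ K, φ (transferElt K T g q) := by
  have hinst : inst = K.fintypeQuotientOfFiniteIndex := Subsingleton.elim _ _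
  subst hinst
  rw [MonoidHom.transfer_def φ T g]
  unfold Subgroup.leftTransversals.diff
  refine Finset.prod_congr rfl fun q _ => ?_
  congr 1
  refine Subtype.ext ?_
  show (T.2.leftQuotientEquiv q : H)⁻¹ *
      ((g • T).2.leftQuotientEquiv q : H) = _
  rw [Subgroup.smul_apply_eq_smul_apply_inv_smul]
  show (tFun K T q)⁻¹ * (g • (tFun K T (g⁻¹ • q))) = _
  rw [smul_eq_mul, transferElt, ← mul_assoc]

lemma kElt_mem (T : K.LeftTransversal) (h : H) :
    h * tFun K T ((h⁻¹ : H) : H ⧸ K) ∈ K := by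
  have h1 := QuotientGroup.eq.mp ((tFun_spec K T ((h⁻¹ : H) : H ⧸ K))).symm
  simpa using h1

/-- For `h : H`, the element `h * t(h⁻¹K)` of `K`. -/
noncomputable def kElt (T : K.LeftTransversal) (h : H) : K :=
  ⟨h * tFun K T ((h⁻¹ : H) : H ⧸ K), kElt_mem K T h⟩

lemma mk_mul_inv (k₀ : K) (h : H) :
    (((↑k₀ * h)⁻¹ : H) : H ⧸ K) = ((h⁻¹ : H) : H ⧸ K) := by
  rw [mul_inv_rev]
  exact QuotientGroup.mk_mul_of_mem _ (inv_mem k₀.2)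

lemma kElt_mul (T : K.LeftTransversal) (k₀ : K) (h : H) :
    kElt K T (↑k₀ * h) = k₀ * kElt K T h := by
  refine Subtype.ext ?_
  show ↑k₀ * h * tFun K T (((↑k₀ * h)⁻¹ : H) : H ⧸ K) = ↑k₀ * (h * tFun K T ((h⁻¹ : H) : H ⧸ K))
  rw [mk_mul_inv, mul_assoc]

lemma mk_inv_inv_t (T : K.LeftTransversal) (q : H ⧸ K) :
    ((((tFun K T q)⁻¹)⁻¹ : H) : H ⧸ K) = q := by
  rw [inv_inv, tFun_spec]

lemma kElt_inv_t (T : K.LeftTransversal) (q : H ⧸ K) :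
    kElt K T (tFun K T q)⁻¹ = 1 := by
  refine Subtype.ext ?_
  show (tFun K T q)⁻¹ * tFun K T ((((tFun K T q)⁻¹)⁻¹ : H) : H ⧸ K) = 1
  rw [mk_inv_inv_t, inv_mul_cancel]

lemma mk_conj (T : K.LeftTransversal) (g : H) (q : H ⧸ K) :
    ((((tFun K T q)⁻¹ * g)⁻¹ : H) : H ⧸ K) = g⁻¹ • q := by
  rw [mul_inv_rev, inv_inv, ← smul_eq_mul, ← MulAction.Quotient.smul_mk, tFun_spec]

lemma kElt_conj (T : K.LeftTransversal) (g : H) (q : H ⧸ K) :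
    kElt K T ((tFun K T q)⁻¹ * g) = transferElt K T g q := by
  refine Subtype.ext ?_
  show (tFun K T q)⁻¹ * g * tFun K T ((((tFun K T q)⁻¹ * g)⁻¹ : H) : H ⧸ K) = _
  rw [mk_conj, transferElt]

end aux

section detind

variable {H : Type*} [Group H] (K : Subgroup H)

set_option maxHeartbeats 1000000 in
lemma det_ind [K.FiniteIndex] {V : Type*} [AddCommGroup V] [Module ℂ V]
    [FiniteDimensional ℂ V] (σ : Representation ℂ K V)
    (T : K.LeftTransversal) [Fintype (H ⧸ K)] [DecidableEq (H ⧸ K)] (g : H) :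
    LinearMap.det ((indRep K σ) g) =
      ((Equiv.Perm.sign (MulAction.toPerm g : Equiv.Perm (H ⧸ K)) : ℤ) : ℂ) ^
          (Module.finrank ℂ V) *
        ∏ q : H ⧸ K, LinearMap.det (σ (transferElt K T g q)) := by
  classical
  let E : indSubmodule K σ →ₗ[ℂ] ((H ⧸ K) → V) :=
    { toFun := fun f q => f.1 (tFun K T q)⁻¹
      map_add' := fun f g => rfl
      map_smul' := fun c f => rfl }
  have hFmem : ∀ v : (H ⧸ K) → V,
      (fun h => σ (kElt K T h) (v ((h⁻¹ : H) : H ⧸ K))) ∈ indSubmodule K σ := by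
    intro v k₀ h
    show σ (kElt K T (↑k₀ * h)) (v (((↑k₀ * h)⁻¹ : H) : H ⧸ K)) =
      σ k₀ (σ (kElt K T h) (v ((h⁻¹ : H) : H ⧸ K)))
    rw [kElt_mul, mk_mul_inv, map_mul]
    rfl
  let F : ((H ⧸ K) → V) →ₗ[ℂ] indSubmodule K σ :=
    { toFun := fun v => ⟨fun h => σ (kElt K T h) (v ((h⁻¹ : H) : H ⧸ K)), hFmem v⟩
      map_add' := fun v w => by
        refine Subtype.ext ?_
        funext h
        show σ (kElt K T h) ((v + w) _) = σ (kElt K T h) (v _) + σ (kElt K T h) (w _)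
        rw [Pi.add_apply, map_add]
      map_smul' := fun c v => by
        refine Subtype.ext ?_
        funext h
        show σ (kElt K T h) ((c • v) _) = c • σ (kElt K T h) (v _)
        rw [Pi.smul_apply, map_smul] }
  have hEF : E ∘ₗ F = LinearMap.id := by
    refine LinearMap.ext fun v => ?_
    funext q
    show σ (kElt K T (tFun K T q)⁻¹) (v ((((tFun K T q)⁻¹)⁻¹ : H) : H ⧸ K)) = v q
    rw [kElt_inv_t, mk_inv_inv_t, map_one]
    rfl
  have hFE : F ∘ₗ E = LinearMap.id := by
    refine LinearMap.ext fun f => ?_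
    refine Subtype.ext ?_
    funext h
    show σ (kElt K T h) (f.1 (tFun K T ((h⁻¹ : H) : H ⧸ K))⁻¹) = f.1 h
    rw [← f.2 (kElt K T h) (tFun K T ((h⁻¹ : H) : H ⧸ K))⁻¹]
    show f.1 (h * tFun K T ((h⁻¹ : H) : H ⧸ K) * (tFun K T ((h⁻¹ : H) : H ⧸ K))⁻¹) = f.1 h
    rw [mul_inv_cancel_right]
  let eqv : indSubmodule K σ ≃ₗ[ℂ] ((H ⧸ K) → V) := LinearEquiv.ofLinear E F hEF hFE
  have hconj : (eqv : indSubmodule K σ →ₗ[ℂ] ((H ⧸ K) → V)) ∘ₗ (indRep K σ) g ∘ₗ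
      (eqv.symm : ((H ⧸ K) → V) →ₗ[ℂ] indSubmodule K σ) =
      LinearMap.pi fun q => (σ (transferElt K T g q)) ∘ₗ
        LinearMap.proj (((MulAction.toPerm g : Equiv.Perm (H ⧸ K)))⁻¹ q) := by
    refine LinearMap.ext fun v => ?_
    funext q
    show σ (kElt K T ((tFun K T q)⁻¹ * g))
        (v (((((tFun K T q)⁻¹ * g)⁻¹ : H)) : H ⧸ K)) =
      σ (transferElt K T g q) (v (((MulAction.toPerm g : Equiv.Perm (H ⧸ K)))⁻¹ q))
    rw [kElt_conj, mk_conj]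
    rfl
  calc LinearMap.det ((indRep K σ) g)
      = LinearMap.det ((eqv : indSubmodule K σ →ₗ[ℂ] ((H ⧸ K) → V)) ∘ₗ (indRep K σ) g ∘ₗ
          (eqv.symm : ((H ⧸ K) → V) →ₗ[ℂ] indSubmodule K σ)) :=
        (LinearMap.det_conj ((indRep K σ) g) eqv).symm
    _ = _ := by rw [hconj, det_twisted_perm]

end detind
/-- Let `H` be a group and `K` a finite-index subgroup.  For a
finite-dimensional complex representation `σ` of `K`,
`det(Ind_K^H σ) = (det Ind_K^H 1_K)^{dim σ} · (det σ ∘ T^H_K)`,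
where `T^H_K` is the transfer map `H^{ab} → K^{ab}` and `1_K` is the trivial
representation of `K`. -/
theorem stmt8 {H : Type*} [Group H] (K : Subgroup H) [K.FiniteIndex] {V : Type*}
    [AddCommGroup V] [Module ℂ V] [FiniteDimensional ℂ V]
    (σ : Representation ℂ K V) :
    MonoidHom.toHomUnits (LinearMap.det.comp (indRep K σ)) =
      (MonoidHom.toHomUnits
          (LinearMap.det.comp (indRep K (Representation.trivial ℂ (G := K) (V := ℂ)))))
          ^ (Module.finrank ℂ V) *
        MonoidHom.transfer (MonoidHom.toHomUnits (LinearMap.det.comp σ)) := by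
  classical
  letI := K.fintypeQuotientOfFiniteIndex
  obtain ⟨T⟩ : Nonempty (K.LeftTransversal) := ⟨default⟩
  ext g
  simp only [MonoidHom.mul_apply, MonoidHom.pow_apply, Units.val_mul, Units.val_pow_eq_pow_val,
    MonoidHom.coe_toHomUnits, MonoidHom.comp_apply]
  rw [transfer_apply_eq K T, det_ind K σ T g,
    det_ind K (Representation.trivial ℂ (G := K) (V := ℂ)) T g]
  have hprod : ((∏ q : H ⧸ K,
      (MonoidHom.toHomUnits (LinearMap.det.comp σ)) (transferElt K T g q) : ℂˣ) : ℂ) =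
      ∏ q : H ⧸ K, LinearMap.det (σ (transferElt K T g q)) := by
    rw [Units.coe_prod]
    rfl
  rw [hprod]
  have htriv : ∀ q : H ⧸ K,
      LinearMap.det ((Representation.trivial ℂ (G := K) (V := ℂ)) (transferElt K T g q)) = 1 := by
    intro q
    simp [Representation.trivial]
  simp only [htriv, Finset.prod_const_one, mul_one, Module.finrank_self, pow_one]
end

section
/- Let H be a group and K a finite-index subgroup. Writing K_g = K ∩ gKg⁻¹ for g ∈ H, one has det(Ind_K^H 1_K) = ∏_{[g]} det(Ind_{K_g}^H 1_{K_g}), where the product runs over the non-trivial double cosets [g] ∈ K\H/K (those with g ∉ K), and the factor det(Ind_{K_g}^H 1_{K_g}) is independent of the representative g of the double coset. -/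
/-- The sign character of a group `H` acting on the coset space `H ⧸ K`: this is
`det(Ind_K^H 1_K)`, the determinant of the permutation representation of `H` on `H ⧸ K`
(defined to be `1` when the quotient is infinite). -/
noncomputable def signChar {H : Type*} [Group H] (K : Subgroup H) : H →* ℤˣ :=
  letI := Classical.dec (Finite (H ⧸ K))
  if h : Finite (H ⧸ K) then
    letI := h
    letI := Fintype.ofFinite (H ⧸ K)
    letI : DecidableEq (H ⧸ K) := Classical.decEq _
    Equiv.Perm.sign.comp (MulAction.toPermHom H (H ⧸ K))
  else 1

/-- `K_g = K ∩ gKg⁻¹`. -/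
def conjInter {H : Type*} [Group H] (K : Subgroup H) (g : H) : Subgroup H :=
  K ⊓ K.map (MulAut.conj g).toMonoidHom

open Equiv Equiv.Perm

section SigmaSign
variable {ι : Type*} [DecidableEq ι] {F : ι → Type*}

private def fiberEquiv (F : ι → Type*) (i : ι) : F i ≃ {x : Σ j, F j // x.1 = i} where
  toFun b := ⟨⟨i, b⟩, rfl⟩
  invFun x := cast (congrArg F x.2) x.1.2
  left_inv b := rfl
  right_inv := fun ⟨⟨j, b⟩, h⟩ => by subst h; rfl

private lemma sigma_single_eq (i : ι) (q : Perm (F i)) :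
    Equiv.sigmaCongrRight (Pi.mulSingle i q) = q.extendDomain (fiberEquiv F i) := by
  apply Equiv.ext
  rintro ⟨j, b⟩
  by_cases h : j = i
  · subst h
    rw [Equiv.Perm.extendDomain_apply_subtype _ (fiberEquiv F j) (rfl : (⟨j, b⟩ : Σ k, F k).1 = j)]
    simp [fiberEquiv, Pi.mulSingle_eq_same]
  · rw [Equiv.Perm.extendDomain_apply_not_subtype _ (fiberEquiv F i) h]
    simp [Pi.mulSingle_eq_of_ne h]

private lemma sign_irrel' {α : Type*} {i1 i2 : DecidableEq α} {f1 f2 : Fintype α} (p : Perm α) :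
    @Equiv.Perm.sign α i1 f1 p = @Equiv.Perm.sign α i2 f2 p := by
  cases Subsingleton.elim i1 i2; cases Subsingleton.elim f1 f2; rfl

private lemma sign_sigmaCongrRight' [Fintype ι] [∀ i, Fintype (F i)] [∀ i, DecidableEq (F i)]
    (p : ∀ i, Perm (F i)) :
    sign (Equiv.sigmaCongrRight p : Perm (Σ i, F i)) = ∏ i, sign (p i) := by
  have key : ∀ i, sign (Equiv.sigmaCongrRight (Pi.mulSingle i (p i)) : Perm (Σ i, F i))
      = sign (p i) := by
    intro i
    rw [sigma_single_eq, sign_extendDomain]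
  calc sign (Equiv.sigmaCongrRight p : Perm (Σ i, F i))
      = (sign.comp (Equiv.Perm.sigmaCongrRightHom F))
          (Finset.univ.noncommProd (fun i => Pi.mulSingle i (p i)) fun i _ j _ _ =>
            Pi.mulSingle_apply_commute p i j) := by
        rw [Finset.noncommProd_mulSingle]; rfl
    _ = Finset.univ.noncommProd
          (fun i => (sign.comp (Equiv.Perm.sigmaCongrRightHom F)) (Pi.mulSingle i (p i)))
          (fun i _ j _ _ => Commute.all _ _) := by
        exact Finset.map_noncommProd _ _ _ _
    _ = ∏ i, (sign.comp (Equiv.Perm.sigmaCongrRightHom F)) (Pi.mulSingle i (p i)) :=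
        Finset.noncommProd_eq_prod _ _
    _ = ∏ i, sign (p i) := Finset.prod_congr rfl fun i _ => key i
end SigmaSign

section Grp
variable {H : Type*} [Group H]

private lemma signChar_apply (K : Subgroup H) [hfin : Finite (H ⧸ K)] (h : H) :
    signChar K h = @Equiv.Perm.sign _ (Classical.decEq _) (Fintype.ofFinite _)
      (MulAction.toPerm h : Perm (H ⧸ K)) := by
  rw [signChar, dif_pos hfin]
  rfl

private lemma signChar_of_infinite (K : Subgroup H) (hfin : ¬ Finite (H ⧸ K)) :
    signChar K = 1 := by
  rw [signChar, dif_neg hfin]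

private lemma signChar_congr {K₁ K₂ : Subgroup H} (e : H ⧸ K₁ ≃ H ⧸ K₂)
    (he : ∀ (h : H) (x : H ⧸ K₁), e (h • x) = h • e x) : signChar K₁ = signChar K₂ := by
  by_cases hfin : Finite (H ⧸ K₁)
  · have hfin2 : Finite (H ⧸ K₂) := Finite.of_equiv _ e
    ext h
    letI : Fintype (H ⧸ K₁) := Fintype.ofFinite _
    letI : Fintype (H ⧸ K₂) := Fintype.ofFinite _
    letI : DecidableEq (H ⧸ K₁) := Classical.decEq _
    letI : DecidableEq (H ⧸ K₂) := Classical.decEq _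
    rw [signChar_apply, signChar_apply]
    have hp : (MulAction.toPerm h : Perm (H ⧸ K₂)) = e.permCongr (MulAction.toPerm h) := by
      ext x
      simp only [Equiv.permCongr_apply, MulAction.toPerm_apply, he]
      simp
    rw [hp, show (@Equiv.Perm.sign _ (Classical.decEq _) (Fintype.ofFinite _)
        (e.permCongr (MulAction.toPerm h) : Perm (H ⧸ K₂)))
        = Equiv.Perm.sign (e.permCongr (MulAction.toPerm h)) from sign_irrel' _,
      Equiv.Perm.sign_permCongr]
  · rw [signChar_of_infinite _ hfin,
      signChar_of_infinite _ (fun h2 => hfin (Finite.of_equiv _ e.symm))]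

/-- The equivariant equivalence `H ⧸ K ≃ H ⧸ cKc⁻¹`, `xK ↦ xc⁻¹ (cKc⁻¹)`. -/
private def conjQuotEquiv (K : Subgroup H) (c : H) :
    H ⧸ K ≃ H ⧸ K.map (MulAut.conj c).toMonoidHom where
  toFun := Quotient.map' (fun x => x * c⁻¹) (by
    intro a b hab
    rw [QuotientGroup.leftRel_apply] at hab ⊢
    refine ⟨a⁻¹ * b, hab, ?_⟩
    simp only [MulEquiv.coe_toMonoidHom, MulAut.conj_apply]
    group)
  invFun := Quotient.map' (fun x => x * c) (by
    intro a b hab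
    rw [QuotientGroup.leftRel_apply] at hab ⊢
    obtain ⟨y, hy, hyx⟩ := hab
    simp only [MulEquiv.coe_toMonoidHom, MulAut.conj_apply] at hyx
    have h2 : (a * c)⁻¹ * (b * c) = c⁻¹ * (a⁻¹ * b) * c := by group
    rw [h2, ← hyx]
    have h3 : c⁻¹ * (c * y * c⁻¹) * c = y := by group
    rwa [h3])
  left_inv := by
    intro x
    induction x using Quotient.inductionOn'
    simp only [Quotient.map'_mk'']
    rw [mul_assoc]
    simp
  right_inv := by
    intro x
    induction x using Quotient.inductionOn'
    simp only [Quotient.map'_mk'']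
    rw [mul_assoc]
    simp
    rfl

private lemma conjQuotEquiv_smul (K : Subgroup H) (c : H) (h : H) (x : H ⧸ K) :
    conjQuotEquiv K c (h • x) = h • conjQuotEquiv K c x := by
  induction x using Quotient.inductionOn' with
  | h a =>
    show Quotient.mk'' (h * a * c⁻¹) = Quotient.mk'' (h * (a * c⁻¹))
    rw [mul_assoc]

private lemma signChar_map_conj (K : Subgroup H) (c : H) :
    signChar (K.map (MulAut.conj c).toMonoidHom) = signChar K :=
  (signChar_congr (conjQuotEquiv K c) (conjQuotEquiv_smul K c)).symm

private lemma conjInter_conj (K : Subgroup H) (g : H) {k₁ k₂ : H} (h₁ : k₁ ∈ K) (h₂ : k₂ ∈ K) :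
    conjInter K (k₁ * g * k₂) = (conjInter K g).map (MulAut.conj k₁).toMonoidHom := by
  ext x
  simp only [conjInter, Subgroup.mem_inf, Subgroup.mem_map, MulEquiv.coe_toMonoidHom,
    MulAut.conj_apply]
  constructor
  · rintro ⟨hxK, y, hy, rfl⟩
    refine ⟨k₁⁻¹ * (k₁ * g * k₂ * y * (k₁ * g * k₂)⁻¹) * k₁, ⟨?_, ?_⟩, by group⟩
    · exact K.mul_mem (K.mul_mem (K.inv_mem h₁) hxK) h₁
    · exact ⟨k₂ * y * k₂⁻¹, K.mul_mem (K.mul_mem h₂ hy) (K.inv_mem h₂), by group⟩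
  · rintro ⟨z, ⟨hzK, y, hy, rfl⟩, rfl⟩
    constructor
    · exact K.mul_mem (K.mul_mem h₁ hzK) (K.inv_mem h₁)
    · exact ⟨k₂⁻¹ * y * k₂, K.mul_mem (K.mul_mem (K.inv_mem h₂) hy) h₂, by group⟩

private lemma signChar_doset_congr (K : Subgroup H) (g h : H)
    (hd : DoubleCoset.mk K K g = DoubleCoset.mk K K h) :
    signChar (conjInter K g) = signChar (conjInter K h) := by
  obtain ⟨k₁, hk₁, k₂, hk₂, rfl⟩ := (DoubleCoset.eq K K g h).1 hd
  rw [conjInter_conj K g hk₁ hk₂, signChar_map_conj]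

private lemma index_map_conj (K : Subgroup H) (c : H) :
    (K.map (MulAut.conj c).toMonoidHom).index = K.index := by
  rw [Subgroup.map_equiv_eq_comap_symm']
  exact Subgroup.index_comap_of_surjective _ (MulAut.conj c).symm.surjective

instance conjInter_finiteIndex (K : Subgroup H) [K.FiniteIndex] (g : H) :
    (conjInter K g).FiniteIndex := by
  haveI : (K.map (MulAut.conj g).toMonoidHom).FiniteIndex :=
    ⟨by rw [index_map_conj]; exact Subgroup.FiniteIndex.index_ne_zero⟩
  unfold conjInter
  infer_instance

/-- The map `H ⧸ K_g → H⧸K × H⧸K`, `x K_g ↦ (xK, xgK)`. -/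
private def dosetPiece (K : Subgroup H) (g : H) : H ⧸ conjInter K g → (H ⧸ K) × (H ⧸ K) :=
  fun q => Quotient.liftOn' q (fun x => (QuotientGroup.mk x, QuotientGroup.mk (x * g))) (by
    intro a b hab
    have hab' : a⁻¹ * b ∈ conjInter K g := QuotientGroup.leftRel_apply.1 hab
    rw [conjInter, Subgroup.mem_inf] at hab'
    obtain ⟨h1, h2⟩ := hab'
    obtain ⟨y, hy, hyx⟩ := Subgroup.mem_map.1 h2
    simp only [MulEquiv.coe_toMonoidHom, MulAut.conj_apply] at hyx
    refine Prod.ext ?_ ?_ <;> simp only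
    · exact (QuotientGroup.eq).2 h1
    · refine (QuotientGroup.eq).2 ?_
      have hg : (a * g)⁻¹ * (b * g) = g⁻¹ * (a⁻¹ * b) * g := by group
      rw [hg, ← hyx]
      have hg2 : g⁻¹ * (g * y * g⁻¹) * g = y := by group
      rwa [hg2])

private lemma dosetPiece_mk (K : Subgroup H) (g a : H) :
    dosetPiece K g (Quotient.mk'' a : H ⧸ conjInter K g)
      = ((Quotient.mk'' a : H ⧸ K), (Quotient.mk'' (a * g) : H ⧸ K)) := rfl

end Grp

set_option maxHeartbeats 1000000
set_option synthInstance.maxHeartbeats 100000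

/-- Let `H` be a group and `K` a finite-index subgroup, `K_g = K ∩ gKg⁻¹`.
Then `det(Ind_K^H 1_K) = ∏_{[g]} det(Ind_{K_g}^H 1_{K_g})`, the product over the
non-trivial double cosets `[g] ∈ K\H/K` (represented by a set `S` containing exactly one
representative of each non-trivial double coset), and moreover the factor
`det(Ind_{K_g}^H 1_{K_g})` is independent of the representative `g` of the double coset.
Here `det(Ind 1)` is the sign character of the permutation action of `H` on the coset
space. -/
theorem stmt9 {H : Type*} [Group H] (K : Subgroup H) [K.FiniteIndex] (S : Finset H)
    (hS : ∀ g ∈ S, g ∉ K)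
    (hrep : ∀ h : H, h ∉ K → ∃! g, g ∈ S ∧ DoubleCoset.mk K K g = DoubleCoset.mk K K h) :
    (signChar K = ∏ g ∈ S, signChar (conjInter K g)) ∧
      ∀ g h : H, DoubleCoset.mk K K g = DoubleCoset.mk K K h →
        signChar (conjInter K g) = signChar (conjInter K h) := by
  refine ⟨?_, fun g h hd => signChar_doset_congr K g h hd⟩
  classical
  let F : ↥S → Type _ := fun g => H ⧸ conjInter K (g : H)
  let T := (H ⧸ K) ⊕ (Σ g : ↥S, F g)
  let φ : T → (H ⧸ K) × (H ⧸ K) :=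
    Sum.elim (fun q => (q, q)) (fun p => dosetPiece K (p.1 : H) p.2)
  have hinj : Function.Injective φ := by
    rintro (q1 | ⟨g1, x1⟩) (q2 | ⟨g2, x2⟩) h
    · simp only [φ, Sum.elim_inl, Prod.mk.injEq] at h
      rw [h.1]
    · exfalso
      induction x2 using Quotient.inductionOn' with
      | h a =>
      simp only [φ, Sum.elim_inl, Sum.elim_inr] at h
      rw [dosetPiece_mk, Prod.mk.injEq] at h
      obtain ⟨h1, h2⟩ := h
      have hq : (QuotientGroup.mk a : H ⧸ K) = QuotientGroup.mk (a * (g2 : H)) :=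
        h1.symm.trans h2
      have hmem : (g2 : H) ∈ K := by simpa using (QuotientGroup.eq).1 hq
      exact hS _ g2.2 hmem
    · exfalso
      induction x1 using Quotient.inductionOn' with
      | h a =>
      simp only [φ, Sum.elim_inl, Sum.elim_inr] at h
      rw [dosetPiece_mk, Prod.mk.injEq] at h
      obtain ⟨h1, h2⟩ := h
      have hq : (QuotientGroup.mk a : H ⧸ K) = QuotientGroup.mk (a * (g1 : H)) :=
        h1.trans h2.symm
      have hmem : (g1 : H) ∈ K := by simpa using (QuotientGroup.eq).1 hq
      exact hS _ g1.2 hmem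
    · induction x1 using Quotient.inductionOn' with
      | h a =>
      induction x2 using Quotient.inductionOn' with
      | h b =>
      simp only [φ, Sum.elim_inr] at h
      rw [dosetPiece_mk, dosetPiece_mk, Prod.mk.injEq] at h
      obtain ⟨h1, h2⟩ := h
      have hk : a⁻¹ * b ∈ K := (QuotientGroup.eq).1 h1
      have hk2 : ((a * g1)⁻¹ * (b * g2) : H) ∈ K := (QuotientGroup.eq).1 h2
      have hre : ((a * g1)⁻¹ * (b * g2) : H) = (g1 : H)⁻¹ * (a⁻¹ * b) * g2 := by group
      rw [hre] at hk2
      have hdos : DoubleCoset.mk K K (g2 : H) = DoubleCoset.mk K K (g1 : H) :=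
        ((DoubleCoset.eq K K _ _).2 ⟨(a⁻¹ * b)⁻¹, K.inv_mem hk,
          (g1 : H)⁻¹ * (a⁻¹ * b) * g2, hk2, by group⟩).symm
      have hgg : g2 = g1 := Subtype.ext
        ((hrep (g1 : H) (hS _ g1.2)).unique ⟨g2.2, hdos⟩ ⟨g1.2, rfl⟩)
      subst hgg
      have hx : (Quotient.mk'' a : H ⧸ conjInter K (g2 : H)) = Quotient.mk'' b := by
        refine (QuotientGroup.eq).2 ?_
        rw [conjInter, Subgroup.mem_inf]
        refine ⟨hk, Subgroup.mem_map.2 ⟨(g2 : H)⁻¹ * (a⁻¹ * b) * g2, hk2, ?_⟩⟩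
        simp only [MulEquiv.coe_toMonoidHom, MulAut.conj_apply]
        group
      rw [hx]
  have hsurj : Function.Surjective φ := by
    rintro ⟨q1, q2⟩
    induction q1 using Quotient.inductionOn' with
    | h a =>
    induction q2 using Quotient.inductionOn' with
    | h b =>
    by_cases hab : a⁻¹ * b ∈ K
    · exact ⟨Sum.inl (Quotient.mk'' a), Prod.ext rfl ((QuotientGroup.eq).2 hab)⟩
    · obtain ⟨u, ⟨huS, hud⟩, _⟩ := hrep (a⁻¹ * b) hab
      obtain ⟨k₁, hk₁, k₂, hk₂, heq⟩ := (DoubleCoset.eq K K u (a⁻¹ * b)).1 hud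
      refine ⟨Sum.inr ⟨⟨u, huS⟩, (Quotient.mk'' (a * k₁) : H ⧸ conjInter K u)⟩, ?_⟩
      simp only [φ, Sum.elim_inr]
      rw [dosetPiece_mk]
      refine Prod.ext ?_ ?_ <;> simp only
      · refine (QuotientGroup.eq).2 ?_
        have h5 : ((a * k₁)⁻¹ * a : H) = k₁⁻¹ := by group
        rw [h5]; exact K.inv_mem hk₁
      · refine (QuotientGroup.eq).2 ?_
        have h5 : ((a * k₁ * u)⁻¹ * b : H) = u⁻¹ * (k₁⁻¹ * (a⁻¹ * b)) := by group
        rw [h5, heq]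
        have h6 : (u⁻¹ * (k₁⁻¹ * (k₁ * u * k₂)) : H) = k₂ := by group
        rw [h6]; exact hk₂
  let E : T ≃ (H ⧸ K) × (H ⧸ K) := Equiv.ofBijective φ ⟨hinj, hsurj⟩
  ext p
  haveI hfinK : Finite (H ⧸ K) := inferInstance
  haveI hfinF : ∀ g : ↥S, Finite (F g) := fun g => inferInstance
  letI iQF : Fintype (H ⧸ K) := Fintype.ofFinite _
  letI iQD : DecidableEq (H ⧸ K) := Classical.decEq _
  letI iFF : ∀ g : ↥S, Fintype (F g) := fun g => Fintype.ofFinite _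
  letI iFD : ∀ g : ↥S, DecidableEq (F g) := fun g => Classical.decEq _
  letI iHD : DecidableEq H := Classical.decEq _
  letI iSubD : DecidableEq ↥S := Subtype.instDecidableEq
  letI iPF : Fintype ((H ⧸ K) × (H ⧸ K)) := instFintypeProd _ _
  letI iPD : DecidableEq ((H ⧸ K) × (H ⧸ K)) := instDecidableEqProd
  letI iSF : Fintype (Σ g : ↥S, F g) := Sigma.instFintype
  letI iSD : DecidableEq (Σ g : ↥S, F g) := Sigma.instDecidableEqSigma
  letI iTF : Fintype T := instFintypeSum _ _
  letI iTD : DecidableEq T := instDecidableEqSum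
  let σ : Perm (H ⧸ K) := MulAction.toPerm p
  let σs : ∀ g : ↥S, Perm (F g) := fun g => MulAction.toPerm p
  let τ : Perm T := Equiv.sumCongr σ (Equiv.sigmaCongrRight σs)
  let π : Perm ((H ⧸ K) × (H ⧸ K)) := Equiv.prodCongr σ σ
  have hcomm : ∀ t, φ (τ t) = π (φ t) := by
    rintro (q | ⟨g, x⟩)
    · rfl
    · induction x using Quotient.inductionOn' with
      | h a =>
      have h5 : p * a * (g : H) = p * (a * (g : H)) := mul_assoc _ _ _
      show ((Quotient.mk'' (p * a) : H ⧸ K), (Quotient.mk'' (p * a * (g : H)) : H ⧸ K))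
          = ((Quotient.mk'' (p * a) : H ⧸ K), (Quotient.mk'' (p * (a * (g : H))) : H ⧸ K))
      rw [h5]
  have hπ : (E.permCongr τ : Perm ((H ⧸ K) × (H ⧸ K))) = π := by
    apply Equiv.ext
    intro x
    rw [Equiv.permCongr_apply]
    exact (hcomm (E.symm x)).trans (by rw [show φ (E.symm x) = x from E.apply_symm_apply x])
  have hsign1 : Equiv.Perm.sign π = 1 := by
    have hπ2 : π = (Equiv.prodCongrLeft fun _ : H ⧸ K => σ)
        * (Equiv.prodCongrRight fun _ : H ⧸ K => σ) := by
      apply Equiv.ext; rintro ⟨x, y⟩; rfl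
    rw [hπ2, map_mul, Equiv.Perm.sign_prodCongrLeft, Equiv.Perm.sign_prodCongrRight]
    exact Int.units_mul_self _
  have hsign2 : Equiv.Perm.sign τ = 1 := by
    rw [← Equiv.Perm.sign_permCongr E τ, show E.permCongr τ = π from hπ, hsign1]
  have hsign3 : Equiv.Perm.sign τ
      = Equiv.Perm.sign σ * ∏ g : ↥S, Equiv.Perm.sign (σs g) := by
    rw [show τ = Equiv.Perm.sumCongr σ (Equiv.sigmaCongrRight σs) from rfl,
      Equiv.Perm.sign_sumCongr, sign_sigmaCongrRight']
  have hfinal : (∏ g : ↥S, Equiv.Perm.sign (σs g)) = Equiv.Perm.sign σ := by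
    have h1 : Equiv.Perm.sign σ * ∏ g : ↥S, Equiv.Perm.sign (σs g) = 1 := by
      rw [← hsign3, hsign2]
    calc (∏ g : ↥S, Equiv.Perm.sign (σs g))
        = (Equiv.Perm.sign σ * Equiv.Perm.sign σ)
            * ∏ g : ↥S, Equiv.Perm.sign (σs g) := by
          rw [Int.units_mul_self, one_mul]
      _ = Equiv.Perm.sign σ
            * (Equiv.Perm.sign σ * ∏ g : ↥S, Equiv.Perm.sign (σs g)) := by rw [mul_assoc]
      _ = Equiv.Perm.sign σ := by rw [h1, mul_one]
  rw [signChar_apply K p, MonoidHom.finset_prod_apply]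
  have hR : ∀ g ∈ S, signChar (conjInter K g) p
      = @Equiv.Perm.sign _ (Classical.decEq _) (Fintype.ofFinite _)
        (MulAction.toPerm p : Perm (H ⧸ conjInter K g)) := fun g hg => signChar_apply _ p
  rw [Finset.prod_congr rfl hR, ← Finset.prod_coe_sort S
    (fun g => @Equiv.Perm.sign _ (Classical.decEq _) (Fintype.ofFinite _)
      (MulAction.toPerm p : Perm (H ⧸ conjInter K g)))]
  rw [show (∏ g : ↥S, @Equiv.Perm.sign _ (Classical.decEq _) (Fintype.ofFinite _)
        (MulAction.toPerm p : Perm (H ⧸ conjInter K (g : H))))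
      = ∏ g : ↥S, Equiv.Perm.sign (σs g) from Finset.prod_congr rfl fun g _ => sign_irrel' _]
  rw [hfinal]
end
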